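/- For R > 0, μ > 0, n ≥ 2, and every X ∈ [0,∞)², the lower bound ν_n X₁^n + (X₁ + X₂)^n ≤ Φ_n(X) holds, where ν_n := exp{(n-1)[(1 + Rmax{1,μ}) ln(1 + 1/(Rmax{1,μ})) − 1]} − 1 > 0. -/

import Mathlib

open Matrix Finset

/-- `α_{k,n} = R (k + μ (n - k - 1))`. -/
noncomputable def alph (R mu : ℝ) (n k : ℕ) : ℝ := R * ((k : ℝ) + mu * ((n : ℝ) - (k : ℝ) - 1))

/-- `a_{j,n}`. -/
noncomputable def coefa (R mu : ℝ) (n j : ℕ) : ℝ :=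
  (n.choose j : ℝ) * ∏ k ∈ Finset.range j, ((k : ℝ) + alph R mu n k) / alph R mu n k

/-- `Φ_n(X) = Σ_{j=0}^n a_{j,n} X₁^j X₂^{n-j}`. -/
noncomputable def Phi (R mu : ℝ) (n : ℕ) (X : ℝ × ℝ) : ℝ :=
  ∑ j ∈ Finset.range (n + 1), coefa R mu n j * X.1 ^ j * X.2 ^ (n - j)

/-- first partial derivative of `Φ_n` in the first variable. -/
noncomputable def d1Phi (R mu : ℝ) (n : ℕ) (X : ℝ × ℝ) : ℝ :=
  deriv (fun t => Phi R mu n (t, X.2)) X.1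

/-- first partial derivative of `Φ_n` in the second variable. -/
noncomputable def d2Phi (R mu : ℝ) (n : ℕ) (X : ℝ × ℝ) : ℝ :=
  deriv (fun t => Phi R mu n (X.1, t)) X.2

/-- `∂₁²Φ_n`. -/
noncomputable def d11Phi (R mu : ℝ) (n : ℕ) (X : ℝ × ℝ) : ℝ :=
  deriv (fun t => d1Phi R mu n (t, X.2)) X.1

/-- `∂₁∂₂Φ_n`. -/
noncomputable def d12Phi (R mu : ℝ) (n : ℕ) (X : ℝ × ℝ) : ℝ :=
  deriv (fun t => d2Phi R mu n (t, X.2)) X.1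

/-- `∂₂²Φ_n`. -/
noncomputable def d22Phi (R mu : ℝ) (n : ℕ) (X : ℝ × ℝ) : ℝ :=
  deriv (fun t => d2Phi R mu n (X.1, t)) X.2

/-- The Hessian matrix `D²Φ_n(X)`. -/
noncomputable def hessPhi (R mu : ℝ) (n : ℕ) (X : ℝ × ℝ) : Matrix (Fin 2) (Fin 2) ℝ :=
  !![d11Phi R mu n X, d12Phi R mu n X; d12Phi R mu n X, d22Phi R mu n X]

/-- The mobility matrix `M(X)`. -/
noncomputable def mobM (R mu : ℝ) (X : ℝ × ℝ) : Matrix (Fin 2) (Fin 2) ℝ :=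
  !![(1 + R) * X.1, R * X.1; mu * R * X.2, mu * R * X.2]

/-- The quantity `A_{j,k}`. -/
noncomputable def Acoef (R mu : ℝ) (n j k : ℕ) : ℝ :=
  ((j : ℝ) + 2) * ((n : ℝ) - (k : ℝ)) * coefa R mu n (j + 2) * coefa R mu n k
    - ((n : ℝ) - (j : ℝ) - 1) * ((k : ℝ) + 1) * coefa R mu n (j + 1) * coefa R mu n (k + 1)

/-- `ν_n`. -/
noncomputable def nuc (R mu : ℝ) (n : ℕ) : ℝ :=
  Real.exp (((n : ℝ) - 1) * ((1 + R * max 1 mu) * Real.log (1 + 1 / (R * max 1 mu)) - 1)) - 1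

lemma keyA (c x y : ℝ) (hc : 0 < c) (hx : 0 ≤ x) (hxy : x ≤ y) :
    ((c+y)*Real.log ((c+y)/c) - y) - ((c+x)*Real.log ((c+x)/c) - x)
      ≤ (y-x)*Real.log ((c+y)/c) := by
  have hcx : 0 < c + x := by linarith
  have hcy : 0 < c + y := by linarith
  have h2 : Real.log (c+y) - Real.log (c+x) ≤ (y-x)/(c+x) := by
    have h := Real.log_le_sub_one_of_pos (show 0 < (c+y)/(c+x) by positivity)
    rw [Real.log_div hcy.ne' hcx.ne'] at h
    have he : (c+y)/(c+x) - 1 = (y-x)/(c+x) := by field_simp; ring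
    linarith [he ▸ h]
  have h3 : (c+x) * (Real.log (c+y) - Real.log (c+x)) ≤ y - x := by
    have := mul_le_mul_of_nonneg_left h2 hcx.le
    rwa [mul_div_cancel₀ _ hcx.ne'] at this
  rw [Real.log_div hcy.ne' hc.ne', Real.log_div hcx.ne' hc.ne']
  nlinarith [h3]

lemma keyB (c : ℝ) (m : ℕ) (hc : 0 < c) (hm : 1 ≤ m) :
    (m:ℝ) * ((1+c)*Real.log (1 + 1/c) - 1)
      ≤ ∑ k ∈ Finset.range (m+1), Real.log ((c*m + k)/(c*m)) := by
  have hmR : (0:ℝ) < m := by exact_mod_cast hm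
  set d := c * m with hd
  have hdpos : 0 < d := by positivity
  set F : ℕ → ℝ := fun k => (d + k) * Real.log ((d + k)/d) - k with hF
  have htel : ∑ k ∈ Finset.range m, (F (k+1) - F k) = F m - F 0 :=
    Finset.sum_range_sub F m
  have hF0 : F 0 = 0 := by simp [hF, div_self hdpos.ne']
  have hFm : F m = (m:ℝ) * ((1+c)*Real.log (1 + 1/c) - 1) := by
    have h1 : (d + m)/d = 1 + 1/c := by
      rw [hd]; field_simp
    rw [hF]; simp only
    rw [h1, hd]; ring
  have hstep : ∀ k ∈ Finset.range m, F (k+1) - F k ≤ Real.log ((d + (k+1))/d) := by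
    intro k _
    have := keyA d (k:ℕ) ((k:ℕ)+1) hdpos (Nat.cast_nonneg k) (by linarith)
    simp only [hF]
    push_cast
    push_cast at this
    linarith
  have hsum : ∑ k ∈ Finset.range m, (F (k+1) - F k)
      ≤ ∑ k ∈ Finset.range m, Real.log ((d + (k+1))/d) :=
    Finset.sum_le_sum hstep
  have hlast : (∑ k ∈ Finset.range (m+1), Real.log ((c*(m:ℝ) + (k:ℝ))/(c*(m:ℝ))))
      = ∑ k ∈ Finset.range m, Real.log ((c*(m:ℝ) + ((k:ℕ)+1:ℕ))/(c*(m:ℝ))) := by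
    rw [Finset.sum_range_succ']
    have : Real.log ((c*(m:ℝ) + ((0:ℕ):ℝ))/(c*(m:ℝ))) = 0 := by
      simp [div_self (show c*(m:ℝ) ≠ 0 by positivity)]
    rw [this, add_zero]
  calc (m:ℝ) * ((1+c)*Real.log (1 + 1/c) - 1) = F m - F 0 := by rw [hF0, hFm]; ring
    _ = ∑ k ∈ Finset.range m, (F (k+1) - F k) := htel.symm
    _ ≤ ∑ k ∈ Finset.range m, Real.log ((d + ((k:ℝ)+1))/d) := hsum
    _ = ∑ k ∈ Finset.range m, Real.log ((c*(m:ℝ) + ((k:ℕ)+1:ℕ))/(c*(m:ℝ))) := by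
        refine Finset.sum_congr rfl fun k _ => ?_
        congr 1
        rw [hd]
        push_cast
        ring
    _ = ∑ k ∈ Finset.range (m+1), Real.log ((c*(m:ℝ) + (k:ℝ))/(c*(m:ℝ))) := hlast.symm

lemma alph_pos (R mu : ℝ) (hR : 0 < R) (hmu : 0 < mu) (n : ℕ) (hn : 2 ≤ n)
    (k : ℕ) (hk : k < n) : 0 < alph R mu n k := by
  unfold alph
  have hkn : (k:ℝ) + 1 ≤ (n:ℝ) := by exact_mod_cast hk
  apply mul_pos hR
  rcases Nat.eq_zero_or_pos k with h0 | h1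
  · subst h0
    have h2 : (2:ℝ) ≤ (n:ℝ) := by exact_mod_cast hn
    have : 0 < mu * ((n:ℝ) - (0:ℕ) - 1) := mul_pos hmu (by push_cast; linarith)
    push_cast at this ⊢
    linarith
  · have hk1 : (1:ℝ) ≤ (k:ℝ) := by exact_mod_cast h1
    have : 0 ≤ mu * ((n:ℝ) - (k:ℝ) - 1) := mul_nonneg hmu.le (by linarith)
    linarith

lemma prod_ge_one (R mu : ℝ) (hR : 0 < R) (hmu : 0 < mu) (n : ℕ) (hn : 2 ≤ n)
    (j : ℕ) (hj : j ≤ n) :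
    1 ≤ ∏ k ∈ Finset.range j, ((k : ℝ) + alph R mu n k) / alph R mu n k := by
  have h1 : ∀ k ∈ Finset.range j, (1:ℝ) ≤ ((k : ℝ) + alph R mu n k) / alph R mu n k := by
    intro k hk
    have hkn : k < n := lt_of_lt_of_le (Finset.mem_range.mp hk) hj
    have hpos := alph_pos R mu hR hmu n hn k hkn
    rw [le_div_iff₀ hpos, one_mul]
    have : (0:ℝ) ≤ (k:ℝ) := Nat.cast_nonneg k
    linarith
  calc (1:ℝ) = ∏ _k ∈ Finset.range j, (1:ℝ) := by simp
    _ ≤ _ := Finset.prod_le_prod (fun i _ => zero_le_one) h1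

lemma coefa_ge (R mu : ℝ) (hR : 0 < R) (hmu : 0 < mu) (n : ℕ) (hn : 2 ≤ n)
    (j : ℕ) (hj : j ≤ n) : (n.choose j : ℝ) ≤ coefa R mu n j := by
  unfold coefa
  nth_rewrite 1 [← mul_one (n.choose j : ℝ)]
  exact mul_le_mul_of_nonneg_left (prod_ge_one R mu hR hmu n hn j hj) (Nat.cast_nonneg _)

lemma coefa_n (R mu : ℝ) (hR : 0 < R) (hmu : 0 < mu) (n : ℕ) (hn : 2 ≤ n) :
    1 + nuc R mu n ≤ coefa R mu n n := by
  set c := R * max 1 mu with hc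
  have hc0 : 0 < c := by
    have : (0:ℝ) < max 1 mu := lt_of_lt_of_le one_pos (le_max_left 1 mu)
    positivity
  set m := n - 1 with hm
  have hnm : n = m + 1 := (Nat.succ_pred_eq_of_pos (by omega)).symm
  have hm1 : 1 ≤ m := by omega
  have hmR : (1:ℝ) ≤ (m:ℝ) := by exact_mod_cast hm1
  have hcm : 0 < c * (m:ℝ) := by positivity
  -- each factor bound
  have hfac : ∀ k ∈ Finset.range n,
      (c*(m:ℝ) + (k:ℝ))/(c*(m:ℝ)) ≤ ((k : ℝ) + alph R mu n k) / alph R mu n k := by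
    intro k hk
    have hkn : k < n := Finset.mem_range.mp hk
    have hpos := alph_pos R mu hR hmu n hn k hkn
    have hub : alph R mu n k ≤ c * (m:ℝ) := by
      unfold alph
      rw [hc]
      have h1 : (1:ℝ) ≤ max 1 mu := le_max_left 1 mu
      have h2 : mu ≤ max 1 mu := le_max_right 1 mu
      have hkn' : (k:ℝ) ≤ (m:ℝ) := by
        have : k ≤ m := by omega
        exact_mod_cast this
      have hmn : (m:ℝ) = (n:ℝ) - 1 := by
        rw [hnm]; push_cast; ring
      rw [hmn]
      have hk0 : (0:ℝ) ≤ (k:ℝ) := Nat.cast_nonneg k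
      have hknn : (k:ℝ) ≤ (n:ℝ) - 1 := hkn'.trans_eq hmn
      have ha : mu * ((n:ℝ)-(k:ℝ)-1) ≤ max 1 mu * ((n:ℝ)-(k:ℝ)-1) :=
        mul_le_mul_of_nonneg_right h2 (by linarith)
      have hb : (k:ℝ) ≤ max 1 mu * (k:ℝ) := le_mul_of_one_le_left hk0 h1
      have heq : max 1 mu * (k:ℝ) + max 1 mu * ((n:ℝ)-(k:ℝ)-1) = max 1 mu * ((n:ℝ)-1) := by ring
      have hcomb : (k:ℝ) + mu*((n:ℝ)-(k:ℝ)-1) ≤ max 1 mu * ((n:ℝ)-1) := by linarith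
      nlinarith [mul_le_mul_of_nonneg_left hcomb hR.le]
    rw [div_le_div_iff₀ hcm hpos]
    have hk0 : (0:ℝ) ≤ (k:ℝ) := Nat.cast_nonneg k
    nlinarith [mul_le_mul_of_nonneg_left hub hk0]
  have hprod : ∏ k ∈ Finset.range n, (c*(m:ℝ) + (k:ℝ))/(c*(m:ℝ))
      ≤ ∏ k ∈ Finset.range n, ((k : ℝ) + alph R mu n k) / alph R mu n k := by
    apply Finset.prod_le_prod
    · intro k _
      have : (0:ℝ) ≤ (k:ℝ) := Nat.cast_nonneg k
      positivity
    · exact hfac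
  have hexp : ∏ k ∈ Finset.range n, (c*(m:ℝ) + (k:ℝ))/(c*(m:ℝ))
      = Real.exp (∑ k ∈ Finset.range n, Real.log ((c*(m:ℝ) + (k:ℝ))/(c*(m:ℝ)))) := by
    rw [Real.exp_sum]
    refine Finset.prod_congr rfl fun k _ => ?_
    rw [Real.exp_log]
    have : (0:ℝ) ≤ (k:ℝ) := Nat.cast_nonneg k
    positivity
  have hB := keyB c m hc0 hm1
  have hsum : (m:ℝ) * ((1+c)*Real.log (1 + 1/c) - 1)
      ≤ ∑ k ∈ Finset.range n, Real.log ((c*(m:ℝ) + (k:ℝ))/(c*(m:ℝ))) := by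
    rw [hnm]; exact hB
  have hnuc : nuc R mu n = Real.exp ((m:ℝ) * ((1+c)*Real.log (1 + 1/c) - 1)) - 1 := by
    unfold nuc
    rw [hc]
    congr 2
    · rw [hnm]; push_cast; ring
  have : Real.exp ((m:ℝ) * ((1+c)*Real.log (1 + 1/c) - 1))
      ≤ ∏ k ∈ Finset.range n, ((k : ℝ) + alph R mu n k) / alph R mu n k := by
    calc Real.exp ((m:ℝ) * ((1+c)*Real.log (1 + 1/c) - 1))
        ≤ Real.exp (∑ k ∈ Finset.range n, Real.log ((c*(m:ℝ) + (k:ℝ))/(c*(m:ℝ)))) :=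
          Real.exp_le_exp.mpr hsum
      _ = ∏ k ∈ Finset.range n, (c*(m:ℝ) + (k:ℝ))/(c*(m:ℝ)) := hexp.symm
      _ ≤ _ := hprod
  unfold coefa
  rw [Nat.choose_self, Nat.cast_one, one_mul, hnuc]
  linarith

lemma nuc_pos (R mu : ℝ) (hR : 0 < R) (hmu : 0 < mu) (n : ℕ) (hn : 2 ≤ n) :
    0 < nuc R mu n := by
  unfold nuc
  set c := R * max 1 mu with hc
  have hc0 : 0 < c := by
    have : (0:ℝ) < max 1 mu := lt_of_lt_of_le one_pos (le_max_left 1 mu)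
    positivity
  have hlog : 1/(1+c) < Real.log (1 + 1/c) := by
    have h := Real.log_lt_sub_one_of_pos (show 0 < c/(c+1) by positivity)
      (by
        intro h
        rw [div_eq_one_iff_eq (by positivity)] at h
        linarith)
    rw [Real.log_div hc0.ne' (by positivity)] at h
    have h2 : Real.log (1 + 1/c) = Real.log (c+1) - Real.log c := by
      rw [← Real.log_div (by positivity) hc0.ne']
      congr 1
      field_simp
    have h3 : c/(c+1) - 1 = -(1/(c+1)) := by field_simp; ring
    rw [h3] at h
    rw [h2]
    have h4 : (1:ℝ)/(1+c) = 1/(c+1) := by ring_nf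
    rw [h4]
    linarith
  have hpos : 0 < (1 + c) * Real.log (1 + 1/c) - 1 := by
    have := mul_lt_mul_of_pos_left hlog (show (0:ℝ) < 1+c by linarith)
    rw [mul_one_div, div_self (show (1:ℝ)+c ≠ 0 by linarith)] at this
    linarith
  have hn1 : (0:ℝ) < (n:ℝ) - 1 := by
    have : (2:ℝ) ≤ (n:ℝ) := by exact_mod_cast hn
    linarith
  have hpp : 0 < ((n:ℝ) - 1) * ((1 + c) * Real.log (1 + 1/c) - 1) := mul_pos hn1 hpos
  have := Real.one_lt_exp_iff.mpr hpp
  linarith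

theorem stmt14 (R mu : ℝ) (hR : 0 < R) (hmu : 0 < mu) (n : ℕ) (hn : 2 ≤ n)
    (X : ℝ × ℝ) (hX1 : 0 ≤ X.1) (hX2 : 0 ≤ X.2) :
    nuc R mu n * X.1 ^ n + (X.1 + X.2) ^ n ≤ Phi R mu n X ∧ 0 < nuc R mu n := by
  refine ⟨?_, nuc_pos R mu hR hmu n hn⟩
  rw [add_pow]
  unfold Phi
  rw [Finset.sum_range_succ, Finset.sum_range_succ]
  have hterm : ∀ j ∈ Finset.range n,
      X.1 ^ j * X.2 ^ (n - j) * (n.choose j : ℝ)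
        ≤ coefa R mu n j * X.1 ^ j * X.2 ^ (n - j) := by
    intro j hj
    have hjn : j ≤ n := le_of_lt (Finset.mem_range.mp hj)
    have h1 := coefa_ge R mu hR hmu n hn j hjn
    have h2 : (0:ℝ) ≤ X.1 ^ j * X.2 ^ (n - j) := by positivity
    nlinarith
  have hS := Finset.sum_le_sum hterm
  have hlast : (1 + nuc R mu n) * X.1 ^ n ≤ coefa R mu n n * X.1 ^ n :=
    mul_le_mul_of_nonneg_right (coefa_n R mu hR hmu n hn) (by positivity)
  simp only [Nat.sub_self, pow_zero, mul_one, Nat.choose_self, Nat.cast_one]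
  linarith
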